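/- Let k ≥ 2 be an integer, and let C_k > 0, α > 0, β > 0 be reals. Suppose given reals t_1, …, t_k with 0 < t_1 ≤ t_2 ≤ ⋯ ≤ t_k, and for each i = 1, …, k−1 reals U_i > 0, α_i with 0 < α_i ≤ α, and β_i with 0 < β_i ≤ β. If C_k/t_k ≤ ((α/β) + 1)/∏_{j=1}^{k−1}(β·U_j + 1) − α/β, then there exists an index j ∈ {1, …, k} such that C_k + Σ_{i=1}^{k−1} α_i·t_i·U_i + Σ_{i=1}^{j−1} β_i·t_i·U_i ≤ t_j. -/

import Mathlib

open Finset

theorem k2u_hyperbolic_form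
    (k : ℕ) (hk : 2 ≤ k) (Ck α β : ℝ)
    (hCk : 0 < Ck) (hα : 0 < α) (hβ : 0 < β)
    (t U a b : ℕ → ℝ)
    (ht1 : 0 < t 1)
    (hmono : ∀ i ∈ Finset.Icc 1 k, ∀ j ∈ Finset.Icc 1 k, i ≤ j → t i ≤ t j)
    (hU : ∀ i ∈ Finset.Icc 1 (k - 1), 0 < U i)
    (ha : ∀ i ∈ Finset.Icc 1 (k - 1), 0 < a i ∧ a i ≤ α)
    (hb : ∀ i ∈ Finset.Icc 1 (k - 1), 0 < b i ∧ b i ≤ β)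
    (hcond : Ck / t k ≤ (α / β + 1) / (∏ j ∈ Finset.Icc 1 (k - 1), (β * U j + 1)) - α / β) :
    ∃ j ∈ Finset.Icc 1 k,
      Ck + (∑ i ∈ Finset.Icc 1 (k - 1), a i * t i * U i)
        + (∑ i ∈ Finset.Icc 1 (j - 1), b i * t i * U i) ≤ t j := by
  by_contra hcon
  push_neg at hcon
  have h1k : (1 : ℕ) ∈ Finset.Icc 1 k := by
    simp only [Finset.mem_Icc]; omega
  have htpos : ∀ i ∈ Finset.Icc 1 k, 0 < t i := by
    intro i hi
    exact ht1.trans_le (hmono 1 h1k i hi (Finset.mem_Icc.mp hi).1)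
  have hsub : Finset.Icc 1 (k - 1) ⊆ Finset.Icc 1 k := by
    apply Finset.Icc_subset_Icc_right; omega
  have htU : ∀ i ∈ Finset.Icc 1 (k - 1), 0 < t i * U i := by
    intro i hi
    exact mul_pos (htpos i (hsub hi)) (hU i hi)
  set S : ℝ := ∑ i ∈ Finset.Icc 1 (k - 1), t i * U i with hSdef
  have hSpos : 0 < S := by
    apply Finset.sum_pos htU
    exact ⟨1, by simp only [Finset.mem_Icc]; omega⟩
  -- bound the a-sum
  have hSa : (∑ i ∈ Finset.Icc 1 (k - 1), a i * t i * U i) ≤ α * S := by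
    rw [hSdef, Finset.mul_sum]
    apply Finset.sum_le_sum
    intro i hi
    have := (ha i hi).2
    have := htU i hi
    nlinarith
  -- bound the b-sums
  have hSb : ∀ j ∈ Finset.Icc 1 k,
      (∑ i ∈ Finset.Icc 1 (j - 1), b i * t i * U i)
        ≤ β * ∑ i ∈ Finset.Icc 1 (j - 1), t i * U i := by
    intro j hj
    rw [Finset.mul_sum]
    apply Finset.sum_le_sum
    intro i hi
    have hi' : i ∈ Finset.Icc 1 (k - 1) := by
      simp only [Finset.mem_Icc] at hi hj ⊢; omega
    have := (hb i hi').2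
    have := htU i hi'
    nlinarith
  -- key strict bound from the contradiction hypothesis
  have hV : ∀ j ∈ Finset.Icc 1 k,
      t j < Ck + α * S + β * ∑ i ∈ Finset.Icc 1 (j - 1), t i * U i := by
    intro j hj
    have h1 := hcon j hj
    have h3 := hSb j hj
    linarith [hSa]
  have hApos : 0 < Ck + α * S := by positivity
  have hprodpos : ∀ m : ℕ, m ≤ k - 1 → 0 < ∏ i ∈ Finset.Icc 1 m, (β * U i + 1) := by
    intro m hm
    apply Finset.prod_pos
    intro i hi
    have hi' : i ∈ Finset.Icc 1 (k - 1) := by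
      simp only [Finset.mem_Icc] at hi ⊢; omega
    nlinarith [hU i hi']
  -- inductive product bound
  have hind : ∀ m : ℕ, m ≤ k - 1 →
      Ck + α * S + β * ∑ i ∈ Finset.Icc 1 m, t i * U i
        ≤ (Ck + α * S) * ∏ i ∈ Finset.Icc 1 m, (β * U i + 1) := by
    intro m
    induction m with
    | zero => intro _; simp
    | succ n ih =>
      intro hn
      have hn' : n ≤ k - 1 := by omega
      have ihn := ih hn'
      have hmem : n + 1 ∈ Finset.Icc 1 k := by
        simp only [Finset.mem_Icc]; omega
      have hmem' : n + 1 ∈ Finset.Icc 1 (k - 1) := by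
        simp only [Finset.mem_Icc]; omega
      have hVn : t (n + 1) < Ck + α * S + β * ∑ i ∈ Finset.Icc 1 n, t i * U i := by
        have := hV (n + 1) hmem
        simpa using this
      have hsum : ∑ i ∈ Finset.Icc 1 (n + 1), t i * U i
          = (∑ i ∈ Finset.Icc 1 n, t i * U i) + t (n + 1) * U (n + 1) :=
        Finset.sum_Icc_succ_top (by omega) _
      have hprod : ∏ i ∈ Finset.Icc 1 (n + 1), (β * U i + 1)
          = (∏ i ∈ Finset.Icc 1 n, (β * U i + 1)) * (β * U (n + 1) + 1) :=
        Finset.prod_Icc_succ_top (by omega) _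
      rw [hsum, hprod]
      have hUpos := hU (n + 1) hmem'
      have hPn := hprodpos n hn'
      nlinarith [mul_pos hβ hUpos, mul_pos (mul_pos hβ hUpos)
        (sub_pos.mpr hVn), mul_le_mul_of_nonneg_right ihn (le_of_lt (by nlinarith : (0:ℝ) < β * U (n+1) + 1))]
  -- instantiate at m = k - 1
  have hkk : k - 1 + 1 = k := by omega
  have hfin : Ck + α * S + β * S ≤ (Ck + α * S) * ∏ i ∈ Finset.Icc 1 (k - 1), (β * U i + 1) := by
    have := hind (k - 1) le_rfl
    rwa [hSdef]
  set P : ℝ := ∏ i ∈ Finset.Icc 1 (k - 1), (β * U i + 1) with hPdef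
  have hPpos : 0 < P := hprodpos (k - 1) le_rfl
  have hkmem : k ∈ Finset.Icc 1 k := by simp only [Finset.mem_Icc]; omega
  have htk : 0 < t k := htpos k hkmem
  have htkV : t k < Ck + α * S + β * S := by
    have := hV k hkmem
    rwa [hSdef] at this
  -- clear denominators in hcond
  have hc : Ck * (β * P) ≤ t k * ((α + β) - α * P) := by
    have h1 : Ck ≤ ((α / β + 1) / P - α / β) * t k := by
      have := (div_le_iff₀ htk).mp hcond
      linarith
    have h2 : ((α / β + 1) / P - α / β) * t k * (β * P) = t k * ((α + β) - α * P) := by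
      field_simp
    calc Ck * (β * P) ≤ ((α / β + 1) / P - α / β) * t k * (β * P) := by
          apply mul_le_mul_of_nonneg_right h1
          positivity
      _ = t k * ((α + β) - α * P) := h2
  -- final contradiction
  by_cases hcase : (α + β) - α * P ≤ 0
  · nlinarith [mul_pos (mul_pos hCk hβ) hPpos,
      mul_nonpos_of_nonneg_of_nonpos htk.le hcase]
  · push_neg at hcase
    have hstrict : t k * ((α + β) - α * P) < (Ck + α * S + β * S) * ((α + β) - α * P) :=
      mul_lt_mul_of_pos_right htkV hcase
    nlinarith [mul_le_mul_of_nonneg_right hfin (by linarith : (0:ℝ) ≤ α + β)]
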